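/- Fix a market with unit demand d = 1, a truthful preference profile ≻, a distinguished agent 1 with ≻_1-most-preferred object a and misreport ≻'_1, an MPS eating profile e for ≻ and an MPS eating profile e' for ≻' = (≻'_1, (≻_i)_{i≠1}). If t_a > τ, then τ' ≤ τ. -/

import Mathlib

open MeasureTheory Finset
open scoped Classical

/-- The amount of probability of objects in `S` consumed up to time `t`
under the eating profile `e`:  `μ_S(t,e) = ∫_0^t |{i : e_i(s) ∈ S}| ds`. -/
noncomputable def eatenAmt {N O : Type*} [Fintype N]
    (e : N → ℝ → O) (S : Set O) (t : ℝ) : ℝ :=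
  ∫ s in (0:ℝ)..t, ((Finset.univ.filter (fun i => e i s ∈ S)).card : ℝ)

/-- The final allocation of the eating profile `e`:
`μ_{ij} = ∫_0^1 1{e_i(s) = j} ds`. -/
noncomputable def finalAlloc {N O : Type*} (e : N → ℝ → O) (i : N) (j : O) : ℝ :=
  ∫ s in (0:ℝ)..1, (if e i s = j then (1:ℝ) else 0)

/-- `f` is a right-continuous step function on `[0,1)`: there is a finite set
of breakpoints, and `f` is constant on the stretches between them. -/
def RightContStep {O : Type*} (f : ℝ → O) : Prop :=
  ∃ B : Finset ℝ, ∀ t ∈ Set.Ico (0:ℝ) 1, ∀ s ∈ Set.Ico (0:ℝ) 1,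
    t ≤ s → (∀ b ∈ B, ¬ (t < b ∧ b ≤ s)) → f s = f t

/-- Object `j` satisfies the capacity condition (Cap) at `(t,e)`. -/
def CapOK {N O : Type*} [Fintype N] (c : O → ℕ)
    (e : N → ℝ → O) (j : O) (t : ℝ) : Prop :=
  eatenAmt e {j} t < c j

/-- Object `j` satisfies the global minimums condition (Global) at `(t,e)`. -/
def GlobalOK {N O : Type*} [Fintype N] [Fintype O] (m : O → ℕ)
    (e : N → ℝ → O) (j : O) (t : ℝ) : Prop :=
  ∃ ε > 0, max (m j : ℝ) (eatenAmt e {j} t + ε) +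
      ∑ k ∈ Finset.univ.erase j, max (m k : ℝ) (eatenAmt e {k} t) ≤
    (Fintype.card N : ℝ)

/-- Object `j` is available at `(t,e)`. -/
def Available {N O : Type*} [Fintype N] [Fintype O] (m c : O → ℕ)
    (e : N → ℝ → O) (j : O) (t : ℝ) : Prop :=
  CapOK c e j t ∧ GlobalOK m e j t

/-- `e` is an MPS eating profile for the strict preference profile `P`:
each `e_i` is a right-continuous step function and, at every time
`t ∈ [0,1)`, `e_i(t)` is available and is `i`'s most preferred object among
the available ones. -/
def IsMPS {N O : Type*} [Fintype N] [Fintype O] (m c : O → ℕ)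
    (P : N → O → O → Prop) (e : N → ℝ → O) : Prop :=
  (∀ i, RightContStep (e i)) ∧
  ∀ i, ∀ t ∈ Set.Ico (0:ℝ) 1,
    Available m c e (e i t) t ∧
    ∀ j, Available m c e j t → j ≠ e i t → P i (e i t) j

/-- The closing time `t_j` of object `j` under `e` (with `inf ∅ = 1`). -/
noncomputable def closeTime {N O : Type*} [Fintype N] [Fintype O] (m c : O → ℕ)
    (e : N → ℝ → O) (j : O) : ℝ :=
  sInf ({t ∈ Set.Icc (0:ℝ) 1 | ¬ Available m c e j t} ∪ {1})

/-- The time `τ` at which the global minimums condition starts binding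
under `e` (with `inf ∅ = 1`). -/
noncomputable def globalTime {N O : Type*} [Fintype N] [Fintype O] (m : O → ℕ)
    (e : N → ℝ → O) : ℝ :=
  sInf ({t ∈ Set.Icc (0:ℝ) 1 | ∃ j : O, ¬ GlobalOK m e j t} ∪ {1})

/-- `x` first-order stochastically dominates `y` for the strict preference
`Pi`. -/
def FOSD {O : Type*} [Fintype O] (Pi : O → O → Prop) (x y : O → ℝ) : Prop :=
  ∀ o : O, ∑ j ∈ Finset.univ.filter (fun j => Pi j o ∨ j = o), y j ≤
    ∑ j ∈ Finset.univ.filter (fun j => Pi j o ∨ j = o), x j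

section Helpers

variable {N O : Type*} [Fintype N] [Fintype O]

/-- The integrand of `eatenAmt`. -/
noncomputable def gfun (e : N → ℝ → O) (S : Set O) : ℝ → ℝ :=
  fun s => ((Finset.univ.filter (fun i => e i s ∈ S)).card : ℝ)

omit [Fintype O] in
lemma eatenAmt_eq (e : N → ℝ → O) (S : Set O) (t : ℝ) :
    eatenAmt e S t = ∫ s in (0:ℝ)..t, gfun e S s := rfl

omit [Fintype O] in
lemma eatenAmt_zero (e : N → ℝ → O) (S : Set O) : eatenAmt e S 0 = 0 := by
  simp [eatenAmt]

omit [Fintype O] in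
lemma gfun_nonneg (e : N → ℝ → O) (S : Set O) (s : ℝ) : 0 ≤ gfun e S s :=
  Nat.cast_nonneg _

omit [Fintype O] in
lemma gfun_le (e : N → ℝ → O) (S : Set O) (s : ℝ) :
    gfun e S s ≤ (Fintype.card N : ℝ) := by
  have := Finset.card_le_card (Finset.filter_subset (fun i => e i s ∈ S) Finset.univ)
  simp only [Finset.card_univ] at this
  unfold gfun
  exact_mod_cast this

omit [Fintype O] in
/-- a.e. equality with a constant on a piece where `e` is constant. -/
lemma gfun_ae_const (e : N → ℝ → O) (S : Set O) {x y : ℝ} (hxy : x ≤ y)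
    (hconst : ∀ s, x ≤ s → s < y → ∀ i, e i s = e i x) :
    gfun e S =ᵐ[volume.restrict (Set.uIoc x y)] (fun _ => gfun e S x) := by
  have h1 : ∀ᵐ s ∂(volume.restrict (Set.uIoc x y)), s ∈ Set.uIoc x y :=
    self_mem_ae_restrict measurableSet_uIoc
  have h2 : ∀ᵐ s ∂(volume.restrict (Set.uIoc x y)), s ≠ y := by
    rw [Filter.eventually_iff, mem_ae_iff]
    have : {s : ℝ | ¬ s ≠ y}ᶜᶜ = {y} := by ext s; simp
    rw [show {s : ℝ | s ≠ y}ᶜ = {y} by ext s; simp]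
    exact le_antisymm ((Measure.restrict_le_self _).trans_eq (by simp)) bot_le
  filter_upwards [h1, h2] with s hs hsy
  rw [Set.uIoc_of_le hxy] at hs
  have hsx : x ≤ s := le_of_lt hs.1
  have hsy' : s < y := lt_of_le_of_ne hs.2 hsy
  simp only [gfun]
  congr 2
  ext i
  simp [hconst s hsx hsy' i]

omit [Fintype O] in
lemma piece_integrable (e : N → ℝ → O) (S : Set O) {x y : ℝ} (hxy : x ≤ y)
    (hconst : ∀ s, x ≤ s → s < y → ∀ i, e i s = e i x) :
    IntervalIntegrable (gfun e S) volume x y :=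
  (intervalIntegrable_const (c := gfun e S x)).congr_ae (gfun_ae_const e S hxy hconst).symm

omit [Fintype O] in
lemma piece_integral (e : N → ℝ → O) (S : Set O) {x y : ℝ} (hxy : x ≤ y)
    (hconst : ∀ s, x ≤ s → s < y → ∀ i, e i s = e i x) :
    ∫ s in x..y, gfun e S s = gfun e S x * (y - x) := by
  have := intervalIntegral.integral_congr_ae (μ := volume) (a := x) (b := y)
    (f := gfun e S) (g := fun _ => gfun e S x) ?_
  · rw [this, intervalIntegral.integral_const, smul_eq_mul, mul_comm]
  · have h := gfun_ae_const e S hxy hconst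
    rw [Filter.EventuallyEq, ae_restrict_iff' measurableSet_uIoc] at h
    filter_upwards [h] with s hs hmem
    exact hs hmem

end Helpers
section Partition

variable {N O : Type*} [Fintype N] [Fintype O]

/-- The partition points of `[0,1]` induced by a breakpoint set `B`. -/
noncomputable def Qset (B : Finset ℝ) : Finset ℝ :=
  insert (0:ℝ) (insert 1 (B.filter (fun b => b ∈ Set.Ioo (0:ℝ) 1)))

lemma Qset_nonneg {B : Finset ℝ} {q : ℝ} (hq : q ∈ Qset B) : 0 ≤ q ∧ q ≤ 1 := by
  simp only [Qset, Finset.mem_insert, Finset.mem_filter, Set.mem_Ioo] at hq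
  rcases hq with h | h | ⟨_, h1, h2⟩
  · simp [h]
  · simp [h]
  · exact ⟨le_of_lt h1, le_of_lt h2⟩

lemma zero_mem_Qset (B : Finset ℝ) : (0:ℝ) ∈ Qset B := by simp [Qset]

lemma one_mem_Qset (B : Finset ℝ) : (1:ℝ) ∈ Qset B := by simp [Qset]

lemma B_mem_Qset {B : Finset ℝ} {b : ℝ} (hb : b ∈ B) (h0 : 0 < b) (h1 : b < 1) :
    b ∈ Qset B := by
  simp only [Qset, Finset.mem_insert, Finset.mem_filter, Set.mem_Ioo]
  exact Or.inr (Or.inr ⟨hb, h0, h1⟩)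

omit [Fintype N] [Fintype O] in
/-- If there is no element of `Qset B` in `(p,q)`, with `p,q ∈ [0,1]`, then all
`e i` are constant on `[p,q)`. -/
lemma const_on_piece (e : N → ℝ → O) (B : Finset ℝ)
    (hB : ∀ t ∈ Set.Ico (0:ℝ) 1, ∀ s ∈ Set.Ico (0:ℝ) 1, t ≤ s →
      (∀ b ∈ B, ¬ (t < b ∧ b ≤ s)) → ∀ i, e i s = e i t)
    {p q : ℝ} (hp : 0 ≤ p) (hq : q ≤ 1)
    (hmid : ∀ r ∈ Qset B, ¬ (p < r ∧ r < q)) :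
    ∀ s, p ≤ s → s < q → ∀ i, e i s = e i p := by
  intro s hps hsq i
  have hs1 : s < 1 := lt_of_lt_of_le hsq hq
  refine hB p ⟨hp, lt_of_le_of_lt hps hs1⟩ s ⟨le_trans hp hps, hs1⟩ hps ?_ i
  rintro b hbB ⟨hpb, hbs⟩
  have hb0 : 0 < b := lt_of_le_of_lt hp hpb
  have hb1 : b < 1 := lt_of_le_of_lt hbs hs1
  exact hmid b (B_mem_Qset hbB hb0 hb1) ⟨hpb, lt_of_le_of_lt hbs hsq⟩

omit [Fintype O] in
lemma integrable01 (e : N → ℝ → O) (B : Finset ℝ)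
    (hB : ∀ t ∈ Set.Ico (0:ℝ) 1, ∀ s ∈ Set.Ico (0:ℝ) 1, t ≤ s →
      (∀ b ∈ B, ¬ (t < b ∧ b ≤ s)) → ∀ i, e i s = e i t)
    (S : Set O) : IntervalIntegrable (gfun e S) volume 0 1 := by
  have key : ∀ n : ℕ, ∀ q ∈ Qset B, ((Qset B).filter (fun r => r < q)).card = n →
      IntervalIntegrable (gfun e S) volume 0 q := by
    intro n
    induction n using Nat.strong_induction_on with
    | _ n IH =>
      intro q hq hcard
      rcases Nat.eq_zero_or_pos n with h0 | hpos
      · have hemp : (Qset B).filter (fun r => r < q) = ∅ :=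
          Finset.card_eq_zero.mp (by rw [hcard, h0])
        have : ¬ (0:ℝ) < q := by
          intro hlt
          have : (0:ℝ) ∈ (Qset B).filter (fun r => r < q) :=
            Finset.mem_filter.mpr ⟨zero_mem_Qset B, hlt⟩
          simp [hemp] at this
        have hq0 : q = 0 := le_antisymm (not_lt.mp this) (Qset_nonneg hq).1
        exact hq0 ▸ IntervalIntegrable.refl
      · set F := (Qset B).filter (fun r => r < q) with hF
        have hFne : F.Nonempty := Finset.card_pos.mp (by omega)
        set p := F.max' hFne with hpdef
        have hpF : p ∈ F := F.max'_mem hFne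
        have hpQ : p ∈ Qset B := (Finset.mem_filter.mp hpF).1
        have hpq : p < q := (Finset.mem_filter.mp hpF).2
        have hcard' : ((Qset B).filter (fun r => r < p)).card < n := by
          rw [← hcard]
          apply Finset.card_lt_card
          constructor
          · intro r hr
            rcases Finset.mem_filter.mp hr with ⟨hr1, hr2⟩
            exact Finset.mem_filter.mpr ⟨hr1, lt_trans hr2 hpq⟩
          · intro hsub
            have := hsub (Finset.mem_filter.mpr ⟨hpQ, hpq⟩)
            exact lt_irrefl p (Finset.mem_filter.mp this).2
        have hint1 := IH _ hcard' p hpQ rfl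
        have hmid : ∀ r ∈ Qset B, ¬ (p < r ∧ r < q) := by
          rintro r hr ⟨h1, h2⟩
          have : r ∈ F := Finset.mem_filter.mpr ⟨hr, h2⟩
          exact absurd (F.le_max' r this) (not_le.mpr h1)
        have hconst := const_on_piece e B hB (Qset_nonneg hpQ).1 (Qset_nonneg hq).2 hmid
        exact hint1.trans (piece_integrable e S (le_of_lt hpq) hconst)
  exact key _ 1 (one_mem_Qset B) rfl

omit [Fintype O] in
lemma integrable_sub (e : N → ℝ → O) (B : Finset ℝ)
    (hB : ∀ t ∈ Set.Ico (0:ℝ) 1, ∀ s ∈ Set.Ico (0:ℝ) 1, t ≤ s →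
      (∀ b ∈ B, ¬ (t < b ∧ b ≤ s)) → ∀ i, e i s = e i t)
    (S : Set O) {x y : ℝ} (hx : 0 ≤ x) (hx1 : x ≤ 1) (hy : 0 ≤ y) (hy1 : y ≤ 1) :
    IntervalIntegrable (gfun e S) volume x y := by
  refine (integrable01 e B hB S).mono_set ?_
  rw [Set.uIcc_of_le (by norm_num : (0:ℝ) ≤ 1)]
  exact Set.uIcc_subset_Icc ⟨hx, hx1⟩ ⟨hy, hy1⟩

end Partition
section Eaten

variable {N O : Type*} [Fintype N] [Fintype O]

omit [Fintype O] in
lemma eaten_add (e : N → ℝ → O) (S : Set O)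
    (hInt : ∀ x y : ℝ, 0 ≤ x → x ≤ 1 → 0 ≤ y → y ≤ 1 →
      IntervalIntegrable (gfun e S) volume x y)
    {x y : ℝ} (hx : 0 ≤ x) (hxy : x ≤ y) (hy1 : y ≤ 1) :
    eatenAmt e S y = eatenAmt e S x + ∫ s in x..y, gfun e S s := by
  rw [eatenAmt_eq, eatenAmt_eq,
    ← intervalIntegral.integral_add_adjacent_intervals
      (hInt 0 x le_rfl zero_le_one hx (le_trans hxy hy1))
      (hInt x y hx (le_trans hxy hy1) (le_trans hx hxy) hy1)]

omit [Fintype O] in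
lemma eaten_mono_lip (e : N → ℝ → O) (S : Set O)
    (hInt : ∀ x y : ℝ, 0 ≤ x → x ≤ 1 → 0 ≤ y → y ≤ 1 →
      IntervalIntegrable (gfun e S) volume x y)
    {x y : ℝ} (hx : 0 ≤ x) (hxy : x ≤ y) (hy1 : y ≤ 1) :
    eatenAmt e S x ≤ eatenAmt e S y ∧
      eatenAmt e S y ≤ eatenAmt e S x + (Fintype.card N : ℝ) * (y - x) := by
  have hy : 0 ≤ y := le_trans hx hxy
  have hx1 : x ≤ 1 := le_trans hxy hy1
  have hint := hInt x y hx hx1 hy hy1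
  have hlow : (0:ℝ) ≤ ∫ s in x..y, gfun e S s := by
    have := intervalIntegral.integral_mono_on (μ := volume) hxy
      (intervalIntegrable_const (c := (0:ℝ))) hint
      (fun s _ => gfun_nonneg e S s)
    simpa using this
  have hhigh : (∫ s in x..y, gfun e S s) ≤ (Fintype.card N : ℝ) * (y - x) := by
    have := intervalIntegral.integral_mono_on (μ := volume) hxy hint
      (intervalIntegrable_const (c := (Fintype.card N : ℝ)))
      (fun s _ => gfun_le e S s)
    simpa [mul_comm] using this
  rw [eaten_add e S hInt hx hxy hy1]
  constructor <;> linarith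

omit [Fintype O] in
lemma eaten_piece_formula (e : N → ℝ → O) (S : Set O)
    (hInt : ∀ x y : ℝ, 0 ≤ x → x ≤ 1 → 0 ≤ y → y ≤ 1 →
      IntervalIntegrable (gfun e S) volume x y)
    {x y : ℝ} (hx : 0 ≤ x) (hxy : x ≤ y) (hy1 : y ≤ 1)
    (hconst : ∀ s, x ≤ s → s < y → ∀ i, e i s = e i x) :
    eatenAmt e S y = eatenAmt e S x + gfun e S x * (y - x) := by
  rw [eaten_add e S hInt hx hxy hy1, piece_integral e S hxy hconst]

end Eaten

section Algebra

variable {O : Type*} [Fintype O]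

lemma fail_forward {n : ℝ} {m : O → ℕ} {u : O → ℝ}
    (hm : (∑ k, (m k : ℝ)) ≤ n) (j : O)
    (hfail : ¬ ∃ ε > 0, max (m j : ℝ) (u j + ε) +
      ∑ k ∈ Finset.univ.erase j, max (m k : ℝ) (u k) ≤ n) :
    n ≤ ∑ k, max (m k : ℝ) (u k) ∧ ∃ k, (m k : ℝ) ≤ u k := by
  push_neg at hfail
  set R := ∑ k ∈ Finset.univ.erase j, max (m k : ℝ) (u k) with hR
  have hsplit : ∑ k, max (m k : ℝ) (u k) = max (m j : ℝ) (u j) + R := by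
    rw [hR]; exact (Finset.add_sum_erase _ _ (Finset.mem_univ j)).symm
  by_cases hu : u j < (m j : ℝ)
  · have h1 := hfail ((m j : ℝ) - u j) (by linarith)
    rw [show max (m j : ℝ) (u j + ((m j : ℝ) - u j)) = (m j : ℝ) by
      rw [max_eq_left]; · ring_nf; · linarith] at h1
    have hGgt : n < ∑ k, max (m k : ℝ) (u k) := by
      rw [hsplit, max_eq_left (le_of_lt hu)]; linarith
    refine ⟨le_of_lt hGgt, ?_⟩
    by_contra hall
    push_neg at hall
    have : ∑ k, max (m k : ℝ) (u k) = ∑ k, (m k : ℝ) :=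
      Finset.sum_congr rfl (fun k _ => max_eq_left (le_of_lt (hall k)))
    rw [this] at hGgt; linarith
  · push_neg at hu
    have h2 : ∀ ε : ℝ, 0 < ε → n < u j + ε + R := by
      intro ε hε
      have := hfail ε hε
      rwa [max_eq_right (by linarith : (m j : ℝ) ≤ u j + ε)] at this
    have h3 : n ≤ u j + R := by
      by_contra hc
      push_neg at hc
      have := h2 ((n - (u j + R)) / 2) (by linarith)
      linarith
    refine ⟨?_, ⟨j, hu⟩⟩
    rw [hsplit, max_eq_right hu]; exact h3

lemma fail_reverse {n : ℝ} {m : O → ℕ} {u : O → ℝ} (j : O)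
    (hG : n ≤ ∑ k, max (m k : ℝ) (u k)) (hj : (m j : ℝ) ≤ u j) :
    ¬ ∃ ε > 0, max (m j : ℝ) (u j + ε) +
      ∑ k ∈ Finset.univ.erase j, max (m k : ℝ) (u k) ≤ n := by
  rintro ⟨ε, hε, hle⟩
  rw [max_eq_right (by linarith : (m j : ℝ) ≤ u j + ε)] at hle
  have hsplit : ∑ k, max (m k : ℝ) (u k) =
      max (m j : ℝ) (u j) + ∑ k ∈ Finset.univ.erase j, max (m k : ℝ) (u k) :=
    (Finset.add_sum_erase _ _ (Finset.mem_univ j)).symm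
  rw [hsplit, max_eq_right hj] at hG
  linarith

end Algebra

section InfHelpers

lemma uo_bdd (A : Set ℝ) (hA : A ⊆ Set.Icc 0 1) : BddBelow (A ∪ {1}) := by
  refine ⟨0, ?_⟩
  rintro t (h | h)
  · exact (hA h).1
  · simp only [Set.mem_singleton_iff] at h; simp [h]

lemma uo_le_one (A : Set ℝ) (hA : A ⊆ Set.Icc 0 1) : sInf (A ∪ {1}) ≤ 1 :=
  csInf_le (uo_bdd A hA) (Or.inr rfl)

lemma uo_nonneg (A : Set ℝ) (hA : A ⊆ Set.Icc 0 1) : 0 ≤ sInf (A ∪ {1}) := by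
  refine le_csInf ⟨1, Or.inr rfl⟩ ?_
  rintro t (h | h)
  · exact (hA h).1
  · simp only [Set.mem_singleton_iff] at h; simp [h]

lemma uo_notmem (A : Set ℝ) (hA : A ⊆ Set.Icc 0 1) {t : ℝ}
    (h : t < sInf (A ∪ {1})) : t ∉ A :=
  fun hmem => absurd (csInf_le (uo_bdd A hA) (Or.inl hmem)) (not_le.mpr h)

lemma uo_approx (A : Set ℝ) (hA : A ⊆ Set.Icc 0 1)
    (h1 : sInf (A ∪ {1}) < 1) {δ : ℝ} (hδ : 0 < δ) :
    ∃ t ∈ A, sInf (A ∪ {1}) ≤ t ∧ t < sInf (A ∪ {1}) + δ := by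
  set τ := sInf (A ∪ {1}) with hτ
  set δ' := min δ (1 - τ) with hδ'def
  have hδ' : 0 < δ' := lt_min hδ (by linarith)
  obtain ⟨x, hx, hlt⟩ := exists_lt_of_csInf_lt (α := ℝ) (s := A ∪ {1})
    ⟨1, Or.inr rfl⟩ (show τ < τ + δ' by linarith)
  have hxA : x ∈ A := by
    rcases hx with h | h
    · exact h
    · exfalso
      simp only [Set.mem_singleton_iff] at h
      have : δ' ≤ 1 - τ := min_le_right _ _
      rw [h] at hlt; linarith
  exact ⟨x, hxA, csInf_le (uo_bdd A hA) (Or.inl hxA),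
    lt_of_lt_of_le hlt (by have : δ' ≤ δ := min_le_left _ _; linarith)⟩

end InfHelpers

/-- Lemma sp2: If agent `i₀`'s favorite object `a` closes
strictly after `τ` in the truthful run, then `τ' ≤ τ`. -/
theorem MPS_lemma_sp2
    {N O : Type*} [Fintype N] [Fintype O] [Nonempty N] [Nonempty O]
    (m c : O → ℕ)
    (hc1 : ∀ j, 1 ≤ c j) (hc2 : ∀ j, c j ≤ Fintype.card N)
    (hfeasc : Fintype.card N ≤ ∑ j, c j)
    (hfeasm : ∑ j, m j ≤ Fintype.card N)
    (P : N → O → O → Prop) (hP : ∀ i, IsStrictTotalOrder O (P i))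
    (i₀ : N) (a : O) (ha : ∀ j : O, j ≠ a → P i₀ a j)
    (P₁' : O → O → Prop) (hP₁' : IsStrictTotalOrder O P₁')
    (P' : N → O → O → Prop)
    (hP' : P' = fun i => if i = i₀ then P₁' else P i)
    (e e' : N → ℝ → O) (he : IsMPS m c P e) (he' : IsMPS m c P' e') :
    globalTime m e < closeTime m c e a → globalTime m e' ≤ globalTime m e := by
  intro hyp
  classical
  set n : ℝ := (Fintype.card N : ℝ) with hn
  have hn1 : (1:ℝ) ≤ n := by
    have := Fintype.card_pos (α := N)
    rw [hn]; exact_mod_cast this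
  set Ag : Set ℝ := {t ∈ Set.Icc (0:ℝ) 1 | ∃ j : O, ¬ GlobalOK m e j t} with hAg
  set Ag' : Set ℝ := {t ∈ Set.Icc (0:ℝ) 1 | ∃ j : O, ¬ GlobalOK m e' j t} with hAg'
  set Ac : Set ℝ := {t ∈ Set.Icc (0:ℝ) 1 | ¬ Available m c e a t} with hAc
  have hAgs : Ag ⊆ Set.Icc 0 1 := fun t ht => ht.1
  have hAgs' : Ag' ⊆ Set.Icc 0 1 := fun t ht => ht.1
  have hAcs : Ac ⊆ Set.Icc 0 1 := fun t ht => ht.1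
  have hyp2 : sInf (Ag ∪ {1}) < sInf (Ac ∪ {1}) := hyp
  suffices hsuff : sInf (Ag' ∪ {1}) ≤ sInf (Ag ∪ {1}) by exact hsuff
  set τ := sInf (Ag ∪ {1}) with hτdef
  have hτ1 : τ < 1 := lt_of_lt_of_le hyp2 (uo_le_one Ac hAcs)
  have hτ0 : 0 ≤ τ := uo_nonneg Ag hAgs
  by_contra hcon
  push_neg at hcon
  -- breakpoints
  obtain ⟨B, hBe, hBe'⟩ : ∃ B : Finset ℝ,
      (∀ t ∈ Set.Ico (0:ℝ) 1, ∀ s ∈ Set.Ico (0:ℝ) 1, t ≤ s →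
        (∀ b ∈ B, ¬ (t < b ∧ b ≤ s)) → ∀ i, e i s = e i t) ∧
      (∀ t ∈ Set.Ico (0:ℝ) 1, ∀ s ∈ Set.Ico (0:ℝ) 1, t ≤ s →
        (∀ b ∈ B, ¬ (t < b ∧ b ≤ s)) → ∀ i, e' i s = e' i t) := by
    choose Be hBeh using he.1
    choose Be' hBeh' using he'.1
    refine ⟨(Finset.univ.biUnion Be) ∪ (Finset.univ.biUnion Be'), ?_, ?_⟩
    · intro t ht s hs hts hnob i
      refine hBeh i t ht s hs hts ?_
      intro b hb
      exact hnob b (Finset.mem_union_left _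
        (Finset.mem_biUnion.mpr ⟨i, Finset.mem_univ _, hb⟩))
    · intro t ht s hs hts hnob i
      refine hBeh' i t ht s hs hts ?_
      intro b hb
      exact hnob b (Finset.mem_union_right _
        (Finset.mem_biUnion.mpr ⟨i, Finset.mem_univ _, hb⟩))
  have hIe : ∀ (S : Set O) (x y : ℝ), 0 ≤ x → x ≤ 1 → 0 ≤ y → y ≤ 1 →
      IntervalIntegrable (gfun e S) volume x y :=
    fun S x y hx hx1 hy hy1 => integrable_sub e B hBe S hx hx1 hy hy1
  have hIe' : ∀ (S : Set O) (x y : ℝ), 0 ≤ x → x ≤ 1 → 0 ≤ y → y ≤ 1 →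
      IntervalIntegrable (gfun e' S) volume x y :=
    fun S x y hx hx1 hy hy1 => integrable_sub e' B hBe' S hx hx1 hy hy1
  have lipE : ∀ (k : O) (x y : ℝ), 0 ≤ x → x ≤ y → y ≤ 1 →
      eatenAmt e {k} x ≤ eatenAmt e {k} y ∧
        eatenAmt e {k} y ≤ eatenAmt e {k} x + n * (y - x) :=
    fun k x y hx hxy hy1 => eaten_mono_lip e {k} (hIe {k}) hx hxy hy1
  have lipE' : ∀ (k : O) (x y : ℝ), 0 ≤ x → x ≤ y → y ≤ 1 →
      eatenAmt e' {k} x ≤ eatenAmt e' {k} y ∧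
        eatenAmt e' {k} y ≤ eatenAmt e' {k} x + n * (y - x) :=
    fun k x y hx hxy hy1 => eaten_mono_lip e' {k} (hIe' {k}) hx hxy hy1
  have avail_a : ∀ t, 0 ≤ t → t ≤ 1 → t < sInf (Ac ∪ {1}) →
      Available m c e a t := by
    intro t h0 h1 hlt
    by_contra hnot
    exact uo_notmem Ac hAcs hlt ⟨⟨h0, h1⟩, hnot⟩
  have glob_e : ∀ t, 0 ≤ t → t ≤ 1 → t < τ → ∀ j, GlobalOK m e j t := by
    intro t h0 h1 hlt j
    by_contra hnot
    exact uo_notmem Ag hAgs hlt ⟨⟨h0, h1⟩, j, hnot⟩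
  have glob_e' : ∀ t, 0 ≤ t → t ≤ 1 → t < sInf (Ag' ∪ {1}) →
      ∀ j, GlobalOK m e' j t := by
    intro t h0 h1 hlt j
    by_contra hnot
    exact uo_notmem Ag' hAgs' hlt ⟨⟨h0, h1⟩, j, hnot⟩
  have ei0 : ∀ t, 0 ≤ t → t < 1 → t < sInf (Ac ∪ {1}) → e i₀ t = a := by
    intro t h0 h1 hlt
    by_contra hne
    have hav := avail_a t h0 (le_of_lt h1) hlt
    have h2 := (he.2 i₀ t ⟨h0, h1⟩).2 a hav (fun h => hne h.symm)
    have h3 := ha (e i₀ t) hne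
    haveI := hP i₀
    exact irrefl_of (P i₀) a (trans_of (P i₀) h3 h2)
  have hm' : (∑ k, (m k : ℝ)) ≤ n := by rw [hn]; exact_mod_cast hfeasm
  -- failure of Global at time τ under e (aggregate form)
  have hGτ : n ≤ ∑ k, max (m k : ℝ) (eatenAmt e {k} τ) := by
    by_contra hlt
    push_neg at hlt
    set G := ∑ k, max (m k : ℝ) (eatenAmt e {k} τ) with hG
    set δ₀ := (n - G) / ((Fintype.card O : ℝ) * n + 1) with hδ₀
    have hcardO : (0:ℝ) ≤ (Fintype.card O : ℝ) * n := by positivity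
    have hδ₀pos : 0 < δ₀ := div_pos (by linarith) (by linarith)
    obtain ⟨x, hxA, hxge, hxlt⟩ := uo_approx Ag hAgs hτ1 hδ₀pos
    have hx1 : x ≤ 1 := (hAgs hxA).2
    obtain ⟨j, hj⟩ := hxA.2
    have hj' : ¬ ∃ ε > 0, max (m j : ℝ) (eatenAmt e {j} x + ε) +
      ∑ k ∈ Finset.univ.erase j, max (m k : ℝ) (eatenAmt e {k} x) ≤ n := hj
    obtain ⟨hGx, -⟩ := fail_forward (n := n) (u := fun k => eatenAmt e {k} x) hm' j hj'
    have hterm : ∀ k : O, max (m k : ℝ) (eatenAmt e {k} x) ≤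
        max (m k : ℝ) (eatenAmt e {k} τ) + n * (x - τ) := by
      intro k
      have h1 := (lipE k τ x hτ0 hxge hx1).2
      have h2 : (0:ℝ) ≤ n * (x - τ) := by nlinarith
      exact max_le (by linarith [le_max_left (m k : ℝ) (eatenAmt e {k} τ)])
        (by linarith [le_max_right (m k : ℝ) (eatenAmt e {k} τ)])
    have hsum : ∑ k, max (m k : ℝ) (eatenAmt e {k} x) ≤
        G + (Fintype.card O : ℝ) * (n * (x - τ)) := by
      calc ∑ k, max (m k : ℝ) (eatenAmt e {k} x)
          ≤ ∑ k : O, (max (m k : ℝ) (eatenAmt e {k} τ) + n * (x - τ)) :=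
            Finset.sum_le_sum (fun k _ => hterm k)
        _ = G + (Fintype.card O : ℝ) * (n * (x - τ)) := by
            rw [Finset.sum_add_distrib, hG]
            simp [Finset.card_univ, mul_comm]
    have hxτδ : x - τ < δ₀ := by linarith
    have hfinal : (Fintype.card O : ℝ) * (n * (x - τ)) < n - G := by
      have h1 : (Fintype.card O : ℝ) * n * δ₀ < n - G := by
        rw [hδ₀]
        rw [div_eq_inv_mul, ← mul_assoc]
        have hpos : (0:ℝ) < (Fintype.card O : ℝ) * n + 1 := by linarith
        rw [mul_comm ((Fintype.card O : ℝ) * n) (((Fintype.card O : ℝ) * n + 1)⁻¹)]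
        rw [mul_assoc]
        have : ((Fintype.card O : ℝ) * n + 1)⁻¹ * (((Fintype.card O : ℝ) * n) * (n - G)) <
            ((Fintype.card O : ℝ) * n + 1)⁻¹ * (((Fintype.card O : ℝ) * n + 1) * (n - G)) := by
          apply mul_lt_mul_of_pos_left _ (inv_pos.mpr hpos)
          nlinarith
        calc ((Fintype.card O : ℝ) * n + 1)⁻¹ * ((Fintype.card O : ℝ) * n * (n - G)) <
            ((Fintype.card O : ℝ) * n + 1)⁻¹ * (((Fintype.card O : ℝ) * n + 1) * (n - G)) := this
          _ = n - G := by field_simp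
      have h2 : (Fintype.card O : ℝ) * (n * (x - τ)) ≤ (Fintype.card O : ℝ) * n * δ₀ := by
        rw [← mul_assoc]
        exact mul_le_mul_of_nonneg_left (le_of_lt hxτδ) hcardO
      linarith
    linarith
  have hwitτ : ∃ k, (m k : ℝ) ≤ eatenAmt e {k} τ := by
    by_contra hall
    push_neg at hall
    set δ₁ := Finset.univ.inf' Finset.univ_nonempty
      (fun k : O => (m k : ℝ) - eatenAmt e {k} τ) with hδ₁
    have hδ₁pos : 0 < δ₁ := by
      rw [hδ₁, Finset.lt_inf'_iff]
      intro k _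
      linarith [hall k]
    have hδpos : 0 < δ₁ / (n + 1) := by positivity
    obtain ⟨x, hxA, hxge, hxlt⟩ := uo_approx Ag hAgs hτ1 hδpos
    have hx1 : x ≤ 1 := (hAgs hxA).2
    obtain ⟨j, hj⟩ := hxA.2
    have hj' : ¬ ∃ ε > 0, max (m j : ℝ) (eatenAmt e {j} x + ε) +
      ∑ k ∈ Finset.univ.erase j, max (m k : ℝ) (eatenAmt e {k} x) ≤ n := hj
    obtain ⟨-, k, hk⟩ := fail_forward (n := n) (u := fun k => eatenAmt e {k} x) hm' j hj'
    have h1 := (lipE k τ x hτ0 hxge hx1).2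
    have h2 : δ₁ ≤ (m k : ℝ) - eatenAmt e {k} τ := by
      rw [hδ₁]
      exact Finset.inf'_le _ (Finset.mem_univ k)
    have h3 : n * (x - τ) < δ₁ := by
      have : n * (x - τ) < n * (δ₁ / (n + 1)) := by
        apply mul_lt_mul_of_pos_left _ (by linarith)
        linarith
      have h4 : n * (δ₁ / (n + 1)) < δ₁ := by
        have hlt1 : n / (n+1) < 1 := by
          rw [div_lt_one (by linarith)]; linarith
        calc n * (δ₁ / (n + 1)) = δ₁ * (n / (n+1)) := by ring
          _ < δ₁ * 1 := mul_lt_mul_of_pos_left hlt1 hδ₁pos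
          _ = δ₁ := mul_one _
      linarith
    linarith
  -- μ_a(τ) < m_a
  have hμa : eatenAmt e {a} τ < (m a : ℝ) := by
    by_contra hc
    push_neg at hc
    have hava := avail_a τ hτ0 (le_of_lt hτ1) hyp2
    exact fail_reverse a hGτ hc hava.2
  -- ACCELERATION: under the misreport, every object other than a is weakly ahead
  have hacc : ∀ t, 0 ≤ t → t ≤ τ → ∀ k, k ≠ a →
      eatenAmt e {k} t ≤ eatenAmt e' {k} t := by
    by_contra hbadex
    push_neg at hbadex
    set bad : Set ℝ := {t | (0 ≤ t ∧ t ≤ τ) ∧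
      ∃ k, k ≠ a ∧ eatenAmt e' {k} t < eatenAmt e {k} t} with hbaddef
    have hbne : bad.Nonempty := by
      obtain ⟨t, h0, h1, k, hk, hlt⟩ := hbadex
      exact ⟨t, ⟨h0, h1⟩, k, hk, hlt⟩
    have hbb : BddBelow bad := ⟨0, fun t ht => ht.1.1⟩
    set t₀ := sInf bad with ht₀def
    have ht₀0 : 0 ≤ t₀ := le_csInf hbne (fun t ht => ht.1.1)
    have ht₀τ : t₀ ≤ τ := by
      obtain ⟨x, hx⟩ := hbne
      exact le_trans (csInf_le hbb hx) hx.1.2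
    have ht₀1 : t₀ < 1 := lt_of_le_of_lt ht₀τ hτ1
    -- Step 1: at t₀ every object ≠ a under e' is weakly ahead
    have hF : ∀ k, k ≠ a → eatenAmt e {k} t₀ ≤ eatenAmt e' {k} t₀ := by
      intro k hka
      rcases eq_or_lt_of_le ht₀0 with h00 | h00
      · rw [← h00, eatenAmt_zero, eatenAmt_zero]
      by_contra hlt
      push_neg at hlt
      set d := eatenAmt e {k} t₀ - eatenAmt e' {k} t₀ with hd
      have hdpos : 0 < d := by rw [hd]; linarith
      set t := max 0 (t₀ - d / (2 * n + 1)) with ht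
      have hdq : 0 < d / (2 * n + 1) := by positivity
      have htlt : t < t₀ := by
        rw [ht]; exact max_lt h00 (by linarith)
      have ht0 : 0 ≤ t := le_max_left _ _
      have hgap : t₀ - t ≤ d / (2 * n + 1) := by
        have := le_max_right 0 (t₀ - d / (2 * n + 1))
        rw [ht]; linarith [le_max_right 0 (t₀ - d / (2 * n + 1))]
      have htnb : t ∉ bad := fun hmem =>
        absurd (csInf_le hbb hmem) (not_le.mpr htlt)
      have htgood : eatenAmt e {k} t ≤ eatenAmt e' {k} t := by
        by_contra hgt
        push_neg at hgt
        exact htnb ⟨⟨ht0, le_trans (le_of_lt htlt) ht₀τ⟩, k, hka, hgt⟩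
      have h1 := (lipE k t t₀ ht0 (le_of_lt htlt) (le_of_lt ht₀1)).2
      have h2 := (lipE' k t t₀ ht0 (le_of_lt htlt) (le_of_lt ht₀1)).1
      have : n * (t₀ - t) ≤ n * (d / (2 * n + 1)) :=
        mul_le_mul_of_nonneg_left hgap (by linarith)
      have hnd : n * (d / (2 * n + 1)) < d := by
        have hlt1 : n / (2 * n + 1) < 1 := by
          rw [div_lt_one (by linarith)]; linarith
        calc n * (d / (2 * n + 1)) = d * (n / (2 * n + 1)) := by ring
          _ < d * 1 := mul_lt_mul_of_pos_left hlt1 hdpos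
          _ = d := mul_one _
      linarith
    -- Step 2: pigeonhole a fixed object k with bad times accumulating at t₀
    have hkex : ∃ k, k ≠ a ∧ ∀ δ : ℝ, 0 < δ → ∃ x ∈ bad, x < t₀ + δ ∧
        eatenAmt e' {k} x < eatenAmt e {k} x := by
      by_contra hno
      push_neg at hno
      have hall : ∀ k : O, ∃ δ : ℝ, 0 < δ ∧ ∀ x ∈ bad, x < t₀ + δ →
          k ≠ a → eatenAmt e {k} x ≤ eatenAmt e' {k} x := by
        intro k
        by_cases hk : k = a
        · exact ⟨1, one_pos, fun x _ _ hka => absurd hk hka⟩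
        · obtain ⟨δ, hδpos, hδ⟩ := hno k hk
          exact ⟨δ, hδpos, fun x hx hxd _ => hδ x hx hxd⟩
      choose δf hδfpos hδf using hall
      set δ := Finset.univ.inf' Finset.univ_nonempty δf with hδdef
      have hδpos : 0 < δ := by
        rw [hδdef, Finset.lt_inf'_iff]
        exact fun k _ => hδfpos k
      obtain ⟨x, hxbad, hxlt⟩ := exists_lt_of_csInf_lt hbne
        (show sInf bad < t₀ + δ by rw [← ht₀def]; linarith)
      obtain ⟨k, hka, hklt⟩ := hxbad.2
      have hxk : x < t₀ + δf k :=
        lt_of_lt_of_le hxlt (by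
          have : δ ≤ δf k := by
            rw [hδdef]; exact Finset.inf'_le _ (Finset.mem_univ k)
          linarith)
      exact absurd (hδf k x hxbad hxk hka) (not_le.mpr hklt)
    obtain ⟨k, hka, hk⟩ := hkex
    -- Step 3: equality at t₀ for object k
    have hk0 : eatenAmt e' {k} t₀ = eatenAmt e {k} t₀ := by
      refine le_antisymm ?_ (hF k hka)
      by_contra hgt
      push_neg at hgt
      set d := eatenAmt e' {k} t₀ - eatenAmt e {k} t₀ with hd
      have hdpos : 0 < d := by rw [hd]; linarith
      have hdq : 0 < d / (n + 1) := by positivity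
      obtain ⟨x, hxbad, hxlt, hxk⟩ := hk (d / (n + 1)) hdq
      have hxt₀ : t₀ ≤ x := csInf_le hbb hxbad
      have hx1 : x ≤ 1 := le_trans hxbad.1.2 (le_of_lt hτ1)
      have h1 := (lipE k t₀ x ht₀0 hxt₀ hx1).2
      have h2 := (lipE' k t₀ x ht₀0 hxt₀ hx1).1
      have hnd : n * (d / (n + 1)) < d := by
        have hlt1 : n / (n + 1) < 1 := by
          rw [div_lt_one (by linarith)]; linarith
        calc n * (d / (n + 1)) = d * (n / (n + 1)) := by ring
          _ < d * 1 := mul_lt_mul_of_pos_left hlt1 hdpos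
          _ = d := mul_one _
      have : n * (x - t₀) ≤ n * (d / (n + 1)) :=
        mul_le_mul_of_nonneg_left (by linarith) (by linarith)
      linarith
    -- Step 4: pick a bad time x for k inside the current piece
    have h1f : (1:ℝ) ∈ (Qset B).filter (fun r => t₀ < r) :=
      Finset.mem_filter.mpr ⟨one_mem_Qset B, ht₀1⟩
    have hfne : ((Qset B).filter (fun r => t₀ < r)).Nonempty := ⟨1, h1f⟩
    set q' := ((Qset B).filter (fun r => t₀ < r)).min' hfne with hq'def
    have hq'mem := ((Qset B).filter (fun r => t₀ < r)).min'_mem hfne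
    have hq'Q : q' ∈ Qset B := (Finset.mem_filter.mp hq'mem).1
    have ht₀q' : t₀ < q' := (Finset.mem_filter.mp hq'mem).2
    obtain ⟨x, hxbad, hxlt, hxk⟩ := hk (q' - t₀) (by linarith)
    have hxt₀ : t₀ ≤ x := csInf_le hbb hxbad
    have hxt₀' : t₀ < x := by
      rcases eq_or_lt_of_le hxt₀ with h | h
      · exfalso; rw [← h, hk0] at hxk; exact lt_irrefl _ hxk
      · exact h
    have hxq' : x < q' := by linarith
    have hxτ : x ≤ τ := hxbad.1.2
    have hx1 : x ≤ 1 := le_trans hxτ (le_of_lt hτ1)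
    have ht₀τ' : t₀ < τ := lt_of_lt_of_le hxt₀' hxτ
    -- Step 5: constancy of both profiles on [t₀, x]
    have h0f : (0:ℝ) ∈ (Qset B).filter (fun r => r ≤ t₀) :=
      Finset.mem_filter.mpr ⟨zero_mem_Qset B, ht₀0⟩
    have hpne : ((Qset B).filter (fun r => r ≤ t₀)).Nonempty := ⟨0, h0f⟩
    set p := ((Qset B).filter (fun r => r ≤ t₀)).max' hpne with hpdef
    have hpmem := ((Qset B).filter (fun r => r ≤ t₀)).max'_mem hpne
    have hpQ : p ∈ Qset B := (Finset.mem_filter.mp hpmem).1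
    have hpt₀ : p ≤ t₀ := (Finset.mem_filter.mp hpmem).2
    have hmid : ∀ r ∈ Qset B, ¬ (p < r ∧ r < q') := by
      rintro r hr ⟨h1, h2⟩
      by_cases hrt : r ≤ t₀
      · have : r ∈ (Qset B).filter (fun r => r ≤ t₀) := Finset.mem_filter.mpr ⟨hr, hrt⟩
        exact absurd (Finset.le_max' _ r this) (not_le.mpr h1)
      · push_neg at hrt
        have : r ∈ (Qset B).filter (fun r => t₀ < r) := Finset.mem_filter.mpr ⟨hr, hrt⟩
        exact absurd (Finset.min'_le _ r this) (not_le.mpr h2)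
    have hconstE := const_on_piece e B hBe (Qset_nonneg hpQ).1 (Qset_nonneg hq'Q).2 hmid
    have hconstE' := const_on_piece e' B hBe' (Qset_nonneg hpQ).1 (Qset_nonneg hq'Q).2 hmid
    have hce : ∀ s, t₀ ≤ s → s < x → ∀ i, e i s = e i t₀ := by
      intro s hs hsx i
      rw [hconstE s (le_trans hpt₀ hs) (lt_trans hsx hxq') i,
        hconstE t₀ hpt₀ ht₀q' i]
    have hce' : ∀ s, t₀ ≤ s → s < x → ∀ i, e' i s = e' i t₀ := by
      intro s hs hsx i
      rw [hconstE' s (le_trans hpt₀ hs) (lt_trans hsx hxq') i,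
        hconstE' t₀ hpt₀ ht₀q' i]
    -- Step 6: affine formulas on [t₀, x]
    have haff := eaten_piece_formula e {k} (hIe {k}) ht₀0 (le_of_lt hxt₀') hx1 hce
    have haff' := eaten_piece_formula e' {k} (hIe' {k}) ht₀0 (le_of_lt hxt₀') hx1 hce'
    -- Step 7: strictly more eaters of k under e at t₀
    have hcards : (gfun e' {k} t₀) * (x - t₀) < (gfun e {k} t₀) * (x - t₀) := by
      rw [haff, haff', hk0] at hxk
      linarith
    have hcard : ((Finset.univ.filter (fun i => e' i t₀ ∈ ({k} : Set O))).card : ℝ) <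
        ((Finset.univ.filter (fun i => e i t₀ ∈ ({k} : Set O))).card : ℝ) := by
      have hΔ : 0 < x - t₀ := by linarith
      exact lt_of_mul_lt_mul_right (by simpa [gfun] using hcards) (le_of_lt hΔ)
    have hcardN : (Finset.univ.filter (fun i => e' i t₀ ∈ ({k} : Set O))).card <
        (Finset.univ.filter (fun i => e i t₀ ∈ ({k} : Set O))).card := by exact_mod_cast hcard
    have hnsub : ¬ (Finset.univ.filter (fun i => e i t₀ ∈ ({k} : Set O)) ⊆
        Finset.univ.filter (fun i => e' i t₀ ∈ ({k} : Set O))) := by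
      intro hsub
      exact absurd (Finset.card_le_card hsub) (not_le.mpr hcardN)
    obtain ⟨i, hiF, hiNF⟩ := Finset.not_subset.mp hnsub
    have hei : e i t₀ = k := by
      have := (Finset.mem_filter.mp hiF).2; simpa using this
    have hei' : e' i t₀ ≠ k := by
      intro h
      exact hiNF (Finset.mem_filter.mpr ⟨Finset.mem_univ _, by simp [h]⟩)
    -- Step 8: MPS contradiction at t₀
    have ht₀Ico : t₀ ∈ Set.Ico (0:ℝ) 1 := ⟨ht₀0, ht₀1⟩
    have ht₀c : t₀ < sInf (Ac ∪ {1}) := lt_trans ht₀τ' hyp2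
    have hii₀ : i ≠ i₀ := by
      intro h
      rw [h, ei0 t₀ ht₀0 ht₀1 ht₀c] at hei
      exact hka hei.symm
    have hmpsE := he.2 i t₀ ht₀Ico
    have hmpsE' := he'.2 i t₀ ht₀Ico
    set j' := e' i t₀ with hj'def
    have hj'k : j' ≠ k := hei'
    have hAvailk' : Available m c e' k t₀ := by
      constructor
      · show eatenAmt e' {k} t₀ < c k
        rw [hk0]
        have hcap : eatenAmt e {k} t₀ < c k := by
          have := hmpsE.1.1
          rwa [hei] at this
        exact hcap
      · exact glob_e' t₀ ht₀0 (le_of_lt ht₀1) (lt_trans ht₀τ' hcon) k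
    have hPj'k : P i j' k := by
      have h1 := hmpsE'.2 k hAvailk' (Ne.symm hj'k)
      have hPeq : P' i = P i := by rw [hP']; simp [hii₀]
      rwa [hPeq] at h1
    have hAvailj' : Available m c e j' t₀ := by
      refine ⟨?_, glob_e t₀ ht₀0 (le_of_lt ht₀1) ht₀τ' j'⟩
      by_cases hj'a : j' = a
      · rw [hj'a]
        exact (avail_a t₀ ht₀0 (le_of_lt ht₀1) ht₀c).1
      · show eatenAmt e {j'} t₀ < c j'
        have h1 : eatenAmt e {j'} t₀ ≤ eatenAmt e' {j'} t₀ := hF j' hj'a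
        have h2 : eatenAmt e' {j'} t₀ < c j' := hmpsE'.1.1
        linarith
    have hPkj' : P i k j' := by
      have h1 := hmpsE.2 j' hAvailj' (by rw [hei]; exact hj'k)
      rwa [hei] at h1
    haveI := hP i
    exact irrefl_of (P i) k (trans_of (P i) hPkj' hPj'k)
  -- FINAL: Global fails at τ under e' as well
  have hGτ' : n ≤ ∑ k, max (m k : ℝ) (eatenAmt e' {k} τ) := by
    refine le_trans hGτ (Finset.sum_le_sum ?_)
    intro k _
    by_cases hk : k = a
    · rw [hk, max_eq_left (le_of_lt hμa)]
      exact le_max_left _ _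
    · exact max_le_max le_rfl (hacc τ hτ0 le_rfl k hk)
  obtain ⟨k₀, hk₀⟩ := hwitτ
  have hk₀a : k₀ ≠ a := by
    intro h
    rw [h] at hk₀
    linarith
  have hk₀' : (m k₀ : ℝ) ≤ eatenAmt e' {k₀} τ :=
    le_trans hk₀ (hacc τ hτ0 le_rfl k₀ hk₀a)
  have hfail' : ¬ GlobalOK m e' k₀ τ :=
    fail_reverse (n := n) (u := fun k => eatenAmt e' {k} τ) k₀ hGτ' hk₀'
  have hτmem : τ ∈ Ag' := ⟨⟨hτ0, le_of_lt hτ1⟩, k₀, hfail'⟩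
  exact absurd (csInf_le (uo_bdd Ag' hAgs') (Or.inl hτmem)) (not_le.mpr hcon)
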